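/- Let K be an algebraically closed field of characteristic zero and let f, f̄ ∈ K(x) be such that f - f̄ is rationally summable. Then for every k ∈ ℕ and every ℤ-orbit ω ⊆ K, dres(f, ω, k) = dres(f̄, ω, k). -/

import Mathlib

open Polynomial

/-- The shift `f(x) ↦ f(x+1)` on rational functions. -/
noncomputable def shift {K : Type*} [Field K] (f : RatFunc K) : RatFunc K :=
  RatFunc.mk (f.num.comp (Polynomial.X + 1)) (f.denom.comp (Polynomial.X + 1))

namespace DresAux

open scoped Classical

variable {K : Type*} [Field K]

/-- If the denominator of `h` does not vanish at `0`, then the Laurent series expansion of `h`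
has no negative coefficients. -/
lemma coeff_neg_zero {h : RatFunc K} (hd : h.denom.eval 0 ≠ 0) {m : ℤ} (hm : m < 0) :
    ((h : LaurentSeries K)).coeff m = 0 := by
  have hB : IsUnit (h.denom : PowerSeries K) := by
    rw [PowerSeries.isUnit_iff_constantCoeff, Polynomial.constantCoeff_coe,
      Polynomial.coeff_zero_eq_eval_zero]
    exact hd.isUnit
  obtain ⟨u, hu⟩ := hB
  have hB0 : ((h.denom : PowerSeries K) : LaurentSeries K) ≠ 0 := by
    intro h0
    apply hd
    have h0' : HahnSeries.ofPowerSeries ℤ K (h.denom : PowerSeries K) =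
        HahnSeries.ofPowerSeries ℤ K 0 := by rw [map_zero]; exact h0
    have : (h.denom : PowerSeries K) = 0 := HahnSeries.ofPowerSeries_injective h0'
    rw [Polynomial.coe_eq_zero_iff] at this
    simp [this]
  have key : (h : LaurentSeries K)
      = (((h.num : PowerSeries K) * ↑u⁻¹ : PowerSeries K) : LaurentSeries K) := by
    have hnd : (h : LaurentSeries K) = ((h.num : PowerSeries K) : LaurentSeries K) /
        ((h.denom : PowerSeries K) : LaurentSeries K) := by
      conv_lhs => rw [← h.num_div_denom]
      rw [RatFunc.algebraMap_apply_div, RatFunc.coe_coe, RatFunc.coe_coe]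
      simp [RatFunc.coePolynomial, ← IsScalarTower.algebraMap_apply]
    rw [hnd, div_eq_iff hB0, ← PowerSeries.coe_mul, mul_assoc, ← hu,
      Units.inv_mul, mul_one]
  rw [key, PowerSeries.coeff_coe, if_pos hm]

lemma coeff_neg_zero_div {A B : K[X]} (hB : B.eval 0 ≠ 0) {m : ℤ} (hm : m < 0) :
    (((algebraMap K[X] (RatFunc K) A / algebraMap K[X] (RatFunc K) B : RatFunc K) :
      LaurentSeries K)).coeff m = 0 := by
  have hBne : B ≠ 0 := fun h => hB (by simp [h])
  obtain ⟨w, hw⟩ := (RatFunc.denom_dvd hBne).mpr ⟨A, rfl⟩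
  refine coeff_neg_zero (fun h0 => hB ?_) hm
  rw [hw, Polynomial.eval_mul, h0, zero_mul]

/-- The functional extracting the coefficient of `(x-α)^(-k)` in the Laurent expansion at `α`. -/
noncomputable def psi (k : ℕ) (α : K) : RatFunc K →+ K where
  toFun h := ((RatFunc.laurent α h : RatFunc K) : LaurentSeries K).coeff (-(k : ℤ))
  map_zero' := by simp
  map_add' x y := by
    show ((RatFunc.laurent α (x + y) : RatFunc K) : LaurentSeries K).coeff (-(k : ℤ)) = _
    rw [map_add, map_add, HahnSeries.coeff_add]

lemma psi_apply (k : ℕ) (α : K) (h : RatFunc K) :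
    psi k α h = ((RatFunc.laurent α h : RatFunc K) : LaurentSeries K).coeff (-(k : ℤ)) := rfl

lemma neg_natCast_neg {k : ℕ} (hk : 1 ≤ k) : (-(k : ℤ)) < 0 :=
  neg_neg_of_pos (by exact_mod_cast hk)

lemma psi_poly {k : ℕ} (hk : 1 ≤ k) (α : K) (p : K[X]) :
    psi k α (algebraMap K[X] (RatFunc K) p) = 0 := by
  rw [psi_apply, RatFunc.laurent_algebraMap]
  exact coeff_neg_zero (by simp) (neg_natCast_neg hk)

lemma psi_term {k : ℕ} (hk : 1 ≤ k) (α : K) (e : K) (β : K) (j : ℕ) :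
    psi k α (RatFunc.C e / (RatFunc.X - RatFunc.C β) ^ j)
      = if k = j ∧ α = β then e else 0 := by
  have hl : RatFunc.laurent α (RatFunc.C e / (RatFunc.X - RatFunc.C β) ^ j)
      = RatFunc.C e / (RatFunc.X - RatFunc.C (β - α)) ^ j := by
    rw [map_div₀, map_pow, map_sub, RatFunc.laurent_C, RatFunc.laurent_X, map_sub,
      RatFunc.laurent_C]
    ring_nf
  rw [psi_apply, hl]
  by_cases hβ : α = β
  · subst hβ
    simp only [sub_self, map_zero, sub_zero, and_true]
    have hC : ((RatFunc.C e : RatFunc K) : LaurentSeries K) = HahnSeries.C e := by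
      simp [← RatFunc.algebraMap_C, ← IsScalarTower.algebraMap_apply]
    rw [map_div₀, map_pow, RatFunc.coe_X, hC]
    have hpow : (HahnSeries.single (1 : ℤ) (1 : K)) ^ j = HahnSeries.single (j : ℤ) 1 := by
      rw [HahnSeries.single_pow]; simp
    have hinv : (HahnSeries.single ((j : ℤ)) (1 : K))⁻¹ = HahnSeries.single (-(j : ℤ)) 1 := by
      rw [HahnSeries.inv_single, inv_one]
    rw [hpow, div_eq_mul_inv, hinv, HahnSeries.C_apply, HahnSeries.single_mul_single,
      zero_add, mul_one, HahnSeries.coeff_single]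
    by_cases hkj : k = j <;> simp [hkj]
  · rw [if_neg (fun h => hβ h.2)]
    have hrep : RatFunc.C e / (RatFunc.X - RatFunc.C (β - α)) ^ j
        = algebraMap K[X] (RatFunc K) (Polynomial.C e) /
          algebraMap K[X] (RatFunc K) ((Polynomial.X - Polynomial.C (β - α)) ^ j) := by
      simp only [map_pow, map_sub, RatFunc.algebraMap_X, RatFunc.algebraMap_C]
    have hγ : β - α ≠ 0 := sub_ne_zero.mpr (fun h => hβ h.symm)
    have hB : ((Polynomial.X - Polynomial.C (β - α)) ^ j).eval 0 ≠ 0 := by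
      simp only [Polynomial.eval_pow, Polynomial.eval_sub, Polynomial.eval_X, Polynomial.eval_C,
        zero_sub]
      exact pow_ne_zero _ (neg_ne_zero.mpr hγ)
    rw [hrep]
    exact coeff_neg_zero_div hB (neg_natCast_neg hk)

lemma psi_repr {k : ℕ} (hk : 1 ≤ k) (α : K) (p : K[X]) (d : ℕ → K → K)
    (hfin : {q : ℕ × K | d q.1 q.2 ≠ 0}.Finite) :
    psi k α (algebraMap K[X] (RatFunc K) p +
      ∑ᶠ (k' : ℕ) (α' : K), RatFunc.C (d k' α') / (RatFunc.X - RatFunc.C α') ^ k') = d k α := by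
  set T : ℕ → K → RatFunc K := fun k' α' =>
    RatFunc.C (d k' α') / (RatFunc.X - RatFunc.C α') ^ k' with hT
  have hT0 : ∀ k' α', d k' α' = 0 → T k' α' = 0 := by intro k' α' h; simp [hT, h]
  have hsupp1 : ∀ k', (Function.support fun α' => T k' α').Finite := by
    intro k'
    apply Set.Finite.subset (hfin.image Prod.snd)
    intro α' hα'
    exact ⟨(k', α'), fun h => hα' (hT0 _ _ h), rfl⟩
  have hsupp2 : (Function.support fun k' => ∑ᶠ α', T k' α').Finite := by
    apply Set.Finite.subset (hfin.image Prod.fst)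
    intro k' hk'
    rw [Function.mem_support] at hk'
    by_contra hxx
    apply hk'
    have hz : ∀ α', T k' α' = 0 := fun α' => hT0 _ _ (by
      by_contra hd
      exact hxx ⟨(k', α'), hd, rfl⟩)
    simp only [hz]
    exact finsum_zero
  rw [map_add, psi_poly hk, zero_add, AddMonoidHom.map_finsum _ hsupp2]
  have hswap : ∀ k', psi k α (∑ᶠ α', T k' α') = ∑ᶠ α', psi k α (T k' α') := fun k' =>
    AddMonoidHom.map_finsum _ (hsupp1 k')
  rw [finsum_congr hswap]
  have hval : ∀ k' α', psi k α (T k' α') = if k = k' ∧ α = α' then d k' α' else 0 :=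
    fun k' α' => psi_term hk α (d k' α') α' k'
  have h1 : ∀ b : ℕ, b ≠ k → (∑ᶠ α', psi k α (T b α')) = 0 := by
    intro b hb
    have : ∀ α', psi k α (T b α') = 0 := fun α' => by
      rw [hval, if_neg (fun h => hb h.1.symm)]
    simp only [this]
    exact finsum_zero
  rw [finsum_eq_single _ k h1,
    finsum_eq_single _ α (fun b hb => by rw [hval, if_neg (fun h => hb h.2.symm)]),
    hval, if_pos ⟨rfl, rfl⟩]

lemma psi_supp {k : ℕ} (hk : 1 ≤ k) (g : RatFunc K) :
    {β : K | psi k β g ≠ 0}.Finite := by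
  apply Set.Finite.subset (Polynomial.finite_setOf_isRoot (g.denom_ne_zero))
  intro β hβ
  simp only [Set.mem_setOf_eq] at hβ ⊢
  by_contra hroot
  apply hβ
  have heval : g.denom.eval β ≠ 0 := hroot
  have hlg : RatFunc.laurent β g = algebraMap K[X] (RatFunc K) (taylor β g.num) /
      algebraMap K[X] (RatFunc K) (taylor β g.denom) := by
    conv_lhs => rw [← g.num_div_denom]
    exact RatFunc.laurent_div β g.num g.denom
  have hB : (taylor β g.denom).eval 0 ≠ 0 := by
    rw [Polynomial.taylor_eval, zero_add]
    exact heval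
  rw [psi_apply, hlg]
  exact coeff_neg_zero_div hB (neg_natCast_neg hk)

lemma shift_eq (g : RatFunc K) : shift g = RatFunc.laurent 1 g := by
  conv_rhs => rw [← g.num_div_denom, RatFunc.laurent_div]
  rw [shift, RatFunc.mk_eq_div]
  congr 2 <;> rw [Polynomial.taylor_apply, Polynomial.C_1]

lemma psi_shift (k : ℕ) (β : K) (g : RatFunc K) : psi k β (shift g) = psi k (β + 1) g := by
  rw [psi_apply, psi_apply, shift_eq, RatFunc.laurent_laurent, add_comm]

end DresAux

/-- Discrete residues are invariant under addition of rationally summable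
functions: if `f - f̄` is summable, then `dres(f,ω,k) = dres(f̄,ω,k)` for every
`ℤ`-orbit `ω` and every order `k ≥ 1`. -/
theorem discrete_residues_invariant {K : Type*} [Field K] [CharZero K] [IsAlgClosed K]
    (f fbar : RatFunc K) (p pbar : Polynomial K) (c cbar : ℕ → K → K)
    (hfin : {q : ℕ × K | c q.1 q.2 ≠ 0}.Finite)
    (hfinbar : {q : ℕ × K | cbar q.1 q.2 ≠ 0}.Finite)
    (hord : ∀ k α, c k α ≠ 0 → 1 ≤ k)
    (hordbar : ∀ k α, cbar k α ≠ 0 → 1 ≤ k)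
    (hf : f = algebraMap (Polynomial K) (RatFunc K) p +
      ∑ᶠ (k : ℕ) (α : K), RatFunc.C (c k α) / (RatFunc.X - RatFunc.C α) ^ k)
    (hfbar : fbar = algebraMap (Polynomial K) (RatFunc K) pbar +
      ∑ᶠ (k : ℕ) (α : K), RatFunc.C (cbar k α) / (RatFunc.X - RatFunc.C α) ^ k)
    (hsum : ∃ g : RatFunc K, f - fbar = shift g - g) :
    ∀ k : ℕ, 1 ≤ k → ∀ α : K,
      (∑ᶠ n : ℤ, c k (α + (n : K))) = ∑ᶠ n : ℤ, cbar k (α + (n : K)) := by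
  intro k hk α
  obtain ⟨g, hg⟩ := hsum
  have hinj : Function.Injective (fun n : ℤ => α + (n : K)) := by
    intro a b h
    have : (a : K) = (b : K) := by simpa using h
    exact_mod_cast this
  have hsupp : ∀ w : K → K, {γ : K | w γ ≠ 0}.Finite →
      (Function.support fun n : ℤ => w (α + (n : K))).Finite := by
    intro w hw
    exact Set.Finite.subset (Set.Finite.preimage hinj.injOn hw) (fun n hn => hn)
  have hcf : ∀ γ : K, c k γ = DresAux.psi k γ f := fun γ => by
    rw [hf]; exact (DresAux.psi_repr hk γ p c hfin).symm
  have hcfbar : ∀ γ : K, cbar k γ = DresAux.psi k γ fbar := fun γ => by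
    rw [hfbar]; exact (DresAux.psi_repr hk γ pbar cbar hfinbar).symm
  have hcfin : {γ : K | c k γ ≠ 0}.Finite :=
    Set.Finite.subset (hfin.image Prod.snd) (fun γ hγ => ⟨(k, γ), hγ, rfl⟩)
  have hcbarfin : {γ : K | cbar k γ ≠ 0}.Finite :=
    Set.Finite.subset (hfinbar.image Prod.snd) (fun γ hγ => ⟨(k, γ), hγ, rfl⟩)
  have hvfin : {γ : K | DresAux.psi k γ g ≠ 0}.Finite := DresAux.psi_supp hk g
  set u : ℤ → K := fun n => DresAux.psi k (α + (n : K)) g with hu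
  have Sc : (Function.support fun n : ℤ => c k (α + (n : K))).Finite := hsupp _ hcfin
  have Scb : (Function.support fun n : ℤ => cbar k (α + (n : K))).Finite := hsupp _ hcbarfin
  have Sv : (Function.support u).Finite := hsupp _ hvfin
  have Sv1 : (Function.support fun n : ℤ => u (n + 1)).Finite := by
    have : Function.Injective (fun n : ℤ => n + 1) := fun a b h => by simpa using h
    exact Set.Finite.subset (Set.Finite.preimage this.injOn Sv) (fun n hn => hn)
  have hpt : ∀ n : ℤ, c k (α + (n : K)) - cbar k (α + (n : K)) = u (n + 1) - u n := by
    intro n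
    rw [hcf, hcfbar, ← map_sub (DresAux.psi k (α + (n : K))), hg,
      map_sub (DresAux.psi k (α + (n : K))), DresAux.psi_shift]
    congr 2
    push_cast
    ring
  have key : (∑ᶠ n : ℤ, c k (α + (n : K))) - (∑ᶠ n : ℤ, cbar k (α + (n : K))) = 0 := by
    rw [← finsum_sub_distrib Sc Scb, finsum_congr hpt, finsum_sub_distrib Sv1 Sv]
    have : (∑ᶠ n : ℤ, u (n + 1)) = ∑ᶠ n : ℤ, u n := by
      have := finsum_comp_equiv (Equiv.addRight (1 : ℤ)) (f := u)
      simpa [Equiv.coe_addRight] using this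
    rw [this, sub_self]
  exact sub_eq_zero.mp key
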